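/- arXiv:2009.04942 — 2 statements merged into one kernel-verified Lean document; each statement's English description precedes it below -/
import Mathlib

section
/- Let W ⊆ ℝ^n be a linear subspace and c, d, d̃ ∈ ℝ^n. Suppose (x̃, s) is an optimal solution to Primal-Dual(W, d̃, c), and suppose the primal program of Primal-Dual(W,d,c) is feasible. Let τ ≥ (κ_W + 1)‖d − d̃‖₁ and T ≥ (2nκ_W + 1)τ, and partition {1,…,n} as I_L = {i : x̃_i > T}, I_M = {i : T ≥ x̃_i > τ}, I_S = {i : τ ≥ x̃_i}, and further partition I_S as I_S⁰ = I_S ∩ cl(I_L) and I_S⁺ = I_S ∖ cl(I_L). Then there exists a primal optimal solution x'' to Primal-Dual(W,d,c) (a minimizer of ⟨c,x⟩ over {x ∈ W + d : x ≥ 0}) such that x''_i > 0 for every i ∈ I_L ∪ I_M and x''_i = 0 for every i ∈ I_S⁰. -/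
open scoped BigOperators

variable {ι : Type*} [Fintype ι] [DecidableEq ι]

/-- The ℓ₁ norm of a vector. -/
noncomputable def norm1 (x : ι → ℝ) : ℝ := ∑ i, |x i|

/-- The ℓ∞ norm of a vector. -/
noncomputable def normInf (x : ι → ℝ) : ℝ := ⨆ i, |x i|

/-- The ℓ₂ norm of a vector. -/
noncomputable def norm2 (x : ι → ℝ) : ℝ := Real.sqrt (∑ i, (x i) ^ 2)

/-- The componentwise negative part `max (-x) 0`. -/
noncomputable def vneg (x : ι → ℝ) : ι → ℝ := fun i => max (-(x i)) 0

/-- The componentwise positive part `max x 0`. -/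
noncomputable def vpos (x : ι → ℝ) : ι → ℝ := fun i => max (x i) 0

/-- `y` is sign-consistent with `x`. -/
def SignConsistent (y x : ι → ℝ) : Prop :=
  (∀ i, 0 ≤ x i * y i) ∧ ∀ i, x i = 0 → y i = 0

/-- The subspace `ℝ^n_C` of vectors supported on `C`. -/
def coordSubspace (C : Set ι) : Submodule ℝ (ι → ℝ) where
  carrier := {x | ∀ i ∉ C, x i = 0}
  zero_mem' := by intro i _; rfl
  add_mem' := by intro a b ha hb i hi; simp [ha i hi, hb i hi]
  smul_mem' := by intro c a ha i hi; simp [ha i hi]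

/-- `C` is a circuit of the subspace `W`: `W ∩ ℝ^n_C` is one-dimensional and no
strict subset of `C` has this property. -/
def IsCircuit (W : Submodule ℝ (ι → ℝ)) (C : Set ι) : Prop :=
  Module.finrank ℝ ↥(W ⊓ coordSubspace C) = 1 ∧
  ∀ C' : Set ι, C' ⊂ C → Module.finrank ℝ ↥(W ⊓ coordSubspace C') ≠ 1

/-- The circuit imbalance measure `κ_W`. -/
noncomputable def kappa (W : Submodule ℝ (ι → ℝ)) : ℝ :=
  sSup ({1} ∪ {r | ∃ C : Set ι, IsCircuit W C ∧ ∃ g ∈ W, g ≠ 0 ∧ {i | g i ≠ 0} = C ∧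
    r = sSup ((fun i => |g i|) '' C) / sInf ((fun i => |g i|) '' C)})

/-- The matroidal closure of `K` with respect to `W`. -/
def clos (W : Submodule ℝ (ι → ℝ)) (K : Set ι) : Set ι :=
  K ∪ {j | j ∉ K ∧ ∃ C : Set ι, IsCircuit W C ∧ j ∈ C ∧ C ⊆ K ∪ {j}}

/-- `z` is the minimum-norm lift `L_I^W(p)` of `p` to `W`:
`z ∈ W`, `z` agrees with `p` on `I`, and `z` has minimum ℓ₂-norm among such vectors. -/
def IsMinLift (W : Submodule ℝ (ι → ℝ)) (I : Finset ι) (p z : ι → ℝ) : Prop :=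
  z ∈ W ∧ (∀ i ∈ I, z i = p i) ∧
  ∀ z' ∈ W, (∀ i ∈ I, z' i = p i) → norm2 z ≤ norm2 z'

/-- The ℓ₂→ℓ₂ operator norm of the lifting map `L_I^W` on `π_I(W)`. -/
noncomputable def liftOpNorm (W : Submodule ℝ (ι → ℝ)) (I : Finset ι) : ℝ :=
  sSup {r | ∃ p z, IsMinLift W I p z ∧ r = norm2 z / Real.sqrt (∑ i ∈ I, (p i) ^ 2)}

/-- The condition number `χ̄_W = max{‖L_I^W‖ : ∅ ≠ I}`. -/
noncomputable def chiBar (W : Submodule ℝ (ι → ℝ)) : ℝ :=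
  sSup {r | ∃ I : Finset ι, I.Nonempty ∧ r = liftOpNorm W I}

/-- The orthogonal complement of `W` in `ℝ^n`. -/
def orthComp (W : Submodule ℝ (ι → ℝ)) : Submodule ℝ (ι → ℝ) where
  carrier := {y | ∀ x ∈ W, ∑ i, x i * y i = 0}
  zero_mem' := by intro x hx; simp
  add_mem' := by
    intro a b ha hb x hx
    simpa [mul_add, Finset.sum_add_distrib, ha x hx] using hb x hx
  smul_mem' := by
    intro c a ha x hx
    have h := ha x hx
    have : ∑ i, x i * (c • a) i = c * ∑ i, x i * a i := by
      rw [Finset.mul_sum]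
      refine Finset.sum_congr rfl fun i _ => ?_
      simp [Pi.smul_apply, smul_eq_mul]; ring
    simpa [this, h]

/-- `x` is a feasible solution to the primal program of Primal-Dual(W,d,c). -/
def PrimalFeasible (W : Submodule ℝ (ι → ℝ)) (d x : ι → ℝ) : Prop :=
  x - d ∈ W ∧ ∀ i, 0 ≤ x i

/-- `s` is a feasible solution to the dual program of Primal-Dual(W,d,c). -/
def DualFeasible (W : Submodule ℝ (ι → ℝ)) (c s : ι → ℝ) : Prop :=
  s - c ∈ orthComp W ∧ ∀ i, 0 ≤ s i

/-- `(x,s)` is an optimal solution to Primal-Dual(W,d,c): both feasible and `⟨x,s⟩ = 0`. -/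
def IsOptimalPair (W : Submodule ℝ (ι → ℝ)) (d c x s : ι → ℝ) : Prop :=
  PrimalFeasible W d x ∧ DualFeasible W c s ∧ ∑ i, x i * s i = 0

/-- The ℓ₂→ℓ₂ operator norm of a matrix. -/
noncomputable def l2OpNorm {m n : Type*} [Fintype m] [Fintype n] [DecidableEq n]
    (A : Matrix m n ℝ) : ℝ :=
  ‖LinearMap.toContinuousLinearMap (Matrix.toEuclideanLin A)‖

/-- The max-norm (largest absolute value of an entry) of a matrix. -/
noncomputable def matMaxNorm {m n : Type*} [Fintype m] [Fintype n] (A : Matrix m n ℝ) : ℝ :=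
  ⨆ i, ⨆ j, |A i j|

section Aux

open Finset

attribute [local instance] Classical.propDecidable

variable {n : ℕ} {W : Submodule ℝ (Fin n → ℝ)}

lemma sc_refl (w : Fin n → ℝ) : SignConsistent w w :=
  ⟨fun i => mul_self_nonneg _, fun _ h => h⟩

lemma sc_trans {v w v' : Fin n → ℝ} (h1 : SignConsistent v w) (h2 : SignConsistent v' v) :
    SignConsistent v' w := by
  constructor
  · intro i
    by_cases hw : w i = 0
    · rw [h2.2 i (h1.2 i hw), mul_zero]
    by_cases hv : v i = 0
    · rw [h2.2 i hv, mul_zero]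
    have h1i := h1.1 i
    have h2i := h2.1 i
    have hwv : 0 < w i * v i := lt_of_le_of_ne h1i (fun h => by
      rcases mul_eq_zero.1 h.symm with h' | h'
      · exact hw h'
      · exact hv h')
    have key : 0 ≤ (w i * v i) * (v i * v' i) := mul_nonneg hwv.le h2i
    have hv2 : 0 < v i * v i := mul_self_pos.mpr hv
    nlinarith [key, hv2]
  · intro i hw; exact h2.2 i (h1.2 i hw)

lemma sc_smul {v w : Fin n → ℝ} (h : SignConsistent v w) {a : ℝ} (ha : 0 ≤ a) :
    SignConsistent (a • v) w := by
  constructor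
  · intro i
    have := h.1 i
    simp only [Pi.smul_apply, smul_eq_mul]
    nlinarith
  · intro i hw
    simp [Pi.smul_apply, h.2 i hw]

/-- In a conformal decomposition, absolute values add up coordinatewise. -/
lemma abs_sum_of_sc {k : ℕ} {h : Fin k → (Fin n → ℝ)} {z : Fin n → ℝ}
    (hsc : ∀ j, SignConsistent (h j) z) (hz : z = ∑ j, h j) (l : Fin n) :
    ∑ j, |h j l| = |z l| := by
  have hzl : z l = ∑ j, h j l := by rw [hz]; simp
  rcases lt_trichotomy (z l) 0 with hneg | h0 | hpos
  · have hle : ∀ j, h j l ≤ 0 := by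
      intro j
      have := (hsc j).1 l
      nlinarith
    have : ∑ j, |h j l| = -∑ j, h j l := by
      rw [← Finset.sum_neg_distrib]
      exact Finset.sum_congr rfl fun j _ => abs_of_nonpos (hle j)
    rw [this, ← hzl, abs_of_neg hneg]
  · have : ∀ j, h j l = 0 := fun j => (hsc j).2 l h0
    simp [this, h0]
  · have hle : ∀ j, 0 ≤ h j l := by
      intro j
      have := (hsc j).1 l
      nlinarith
    have : ∑ j, |h j l| = ∑ j, h j l :=
      Finset.sum_congr rfl fun j _ => abs_of_nonneg (hle j)
    rw [this, ← hzl, abs_of_pos hpos]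

end Aux
section Aux2

open Finset

attribute [local instance] Classical.propDecidable

variable {n : ℕ} {W : Submodule ℝ (Fin n → ℝ)}

/-- Exchange/reduction step: if `u ∈ W` is supported inside the support of `v ∈ W`, has some
coordinate where it agrees in sign with `v`, and is not a multiple of `v`, then we can cancel
a coordinate of `v` staying sign-consistent. -/
lemma red_aux {v u : Fin n → ℝ} (hv : v ∈ W) (hu : u ∈ W)
    (hsupp : ∀ i, u i ≠ 0 → v i ≠ 0)
    (hex : ∃ i, 0 < u i * v i)
    (hnm : ∀ a : ℝ, u ≠ a • v) :
    ∃ v', v' ∈ W ∧ v' ≠ 0 ∧ SignConsistent v' v ∧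
      (∀ i, v' i ≠ 0 → v i ≠ 0) ∧ ∃ i, v i ≠ 0 ∧ v' i = 0 := by
  classical
  set S : Finset (Fin n) := Finset.univ.filter (fun i => 0 < u i * v i) with hS
  have hSne : S.Nonempty := by
    obtain ⟨i, hi⟩ := hex
    exact ⟨i, by simp [hS, hi]⟩
  obtain ⟨i₀, hi₀S, hi₀min⟩ := S.exists_min_image (fun i => v i / u i) hSne
  have hi₀ : 0 < u i₀ * v i₀ := by simpa [hS] using hi₀S
  have hu₀ : u i₀ ≠ 0 := fun h => by simp [h] at hi₀
  have hv₀ : v i₀ ≠ 0 := fun h => by simp [h] at hi₀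
  set lam : ℝ := v i₀ / u i₀ with hlam
  have hlampos : 0 < lam := by
    rw [hlam, div_pos_iff]
    rcases lt_trichotomy (u i₀) 0 with h | h | h
    · right; constructor <;> nlinarith
    · exact absurd h hu₀
    · left; constructor <;> nlinarith
  refine ⟨v - lam • u, sub_mem hv (Submodule.smul_mem _ _ hu), ?_, ?_, ?_, ⟨i₀, hv₀, ?_⟩⟩
  · intro h
    have : u = lam⁻¹ • v := by
      funext i
      have := congrFun h i
      simp only [Pi.sub_apply, Pi.smul_apply, smul_eq_mul, Pi.zero_apply] at this ⊢
      field_simp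
      linarith
    exact hnm lam⁻¹ this
  · constructor
    · intro i
      simp only [Pi.sub_apply, Pi.smul_apply, smul_eq_mul]
      rcases le_or_gt (u i * v i) 0 with h | h
      · have hx : lam * (u i * v i) ≤ 0 := by nlinarith
        nlinarith [hx, sq_nonneg (v i)]
      · have hiS : i ∈ S := by simp [hS, h]
        have hle := hi₀min i hiS
        have hui : u i ≠ 0 := fun hh => by simp [hh] at h
        have : lam * (u i * v i) ≤ v i / u i * (u i * v i) :=
          mul_le_mul_of_nonneg_right hle h.le
        have heq : v i / u i * (u i * v i) = v i * v i := by
          field_simp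
        nlinarith
    · intro i hvi
      have hui : u i = 0 := by
        by_contra hh; exact (hsupp i hh) hvi
      simp [hvi, hui]
  · intro i hvi'
    by_contra hvi
    have hui : u i = 0 := by
      by_contra hh; exact (hsupp i hh) hvi
    simp [hvi, hui] at hvi'
  · simp only [Pi.sub_apply, Pi.smul_apply, smul_eq_mul, hlam]
    field_simp
    ring

/-- Reduction without the sign hypothesis. -/
lemma red {v u : Fin n → ℝ} (hv : v ∈ W) (hu : u ∈ W)
    (hsupp : ∀ i, u i ≠ 0 → v i ≠ 0) (hu0 : u ≠ 0)
    (hnm : ∀ a : ℝ, u ≠ a • v) :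
    ∃ v', v' ∈ W ∧ v' ≠ 0 ∧ SignConsistent v' v ∧
      (∀ i, v' i ≠ 0 → v i ≠ 0) ∧ ∃ i, v i ≠ 0 ∧ v' i = 0 := by
  obtain ⟨i, hi⟩ : ∃ i, u i ≠ 0 := by
    by_contra h
    push_neg at h
    exact hu0 (funext h)
  have hvi : v i ≠ 0 := hsupp i hi
  have hne : u i * v i ≠ 0 := mul_ne_zero hi hvi
  rcases hne.lt_or_gt with hlt | hgt
  · refine red_aux hv (neg_mem hu) (fun j hj => hsupp j (by simpa using hj)) ⟨i, by
      simpa using by nlinarith⟩ (fun a h => hnm (-a) ?_)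
    · funext j
      have := congrFun h j
      simp only [Pi.neg_apply, Pi.smul_apply, smul_eq_mul] at this ⊢
      linarith
  · exact red_aux hv hu hsupp ⟨i, hgt⟩ hnm

end Aux2
section Aux3

open Finset

attribute [local instance] Classical.propDecidable

variable {n : ℕ} {W : Submodule ℝ (Fin n → ℝ)}

lemma mem_coordSubspace {C : Set (Fin n)} {x : Fin n → ℝ} :
    x ∈ coordSubspace C ↔ ∀ i ∉ C, x i = 0 := Iff.rfl

/-- Every nonzero `w ∈ W` has a sign-consistent circuit vector supported inside `supp w`. -/
lemma exists_conformal_circuit {w : Fin n → ℝ} (hWw : w ∈ W) (hw0 : w ≠ 0) :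
    ∃ v, v ∈ W ∧ v ≠ 0 ∧ SignConsistent v w ∧ IsCircuit W {i | v i ≠ 0} := by
  classical
  set P : (Fin n → ℝ) → Prop := fun g => g ∈ W ∧ g ≠ 0 ∧ SignConsistent g w with hP
  set cS : Set ℕ := {m | ∃ g, P g ∧ (Finset.univ.filter (fun i => g i ≠ 0)).card = m} with hcS
  have hne : cS.Nonempty := ⟨_, w, ⟨hWw, hw0, sc_refl w⟩, rfl⟩
  obtain ⟨v, hPv, hcard⟩ := Nat.sInf_mem hne
  have hmin : ∀ g, P g → (Finset.univ.filter (fun i => v i ≠ 0)).card ≤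
      (Finset.univ.filter (fun i => g i ≠ 0)).card := by
    intro g hg
    rw [hcard]
    exact Nat.sInf_le ⟨g, hg, rfl⟩
  obtain ⟨hvW, hv0, hvw⟩ := hPv
  -- helper: no nonzero u ∈ W supported in supp v that is not a multiple of v
  have key : ∀ u : Fin n → ℝ, u ∈ W → (∀ i, u i ≠ 0 → v i ≠ 0) → u ≠ 0 →
      (∀ a : ℝ, u ≠ a • v) → False := by
    intro u huW husupp hu0 hnm
    obtain ⟨v', hv'W, hv'0, hv'sc, hv'supp, i, hvi, hv'i⟩ := red hvW huW husupp hu0 hnm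
    have hP' : P v' := ⟨hv'W, hv'0, sc_trans hvw hv'sc⟩
    have hss : (Finset.univ.filter (fun i => v' i ≠ 0)) ⊂
        (Finset.univ.filter (fun i => v i ≠ 0)) := by
      refine Finset.ssubset_iff_of_subset ?_ |>.mpr ⟨i, by simp [hvi], by simp [hv'i]⟩
      intro j hj
      simp only [Finset.mem_filter, Finset.mem_univ, true_and] at hj ⊢
      exact hv'supp j hj
    exact absurd (hmin v' hP') (not_le.mpr (Finset.card_lt_card hss))
  refine ⟨v, hvW, hv0, hvw, ?_, ?_⟩
  · -- finrank = 1
    have hspan : W ⊓ coordSubspace {i | v i ≠ 0} = Submodule.span ℝ {v} := by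
      apply le_antisymm
      · intro u hu
        obtain ⟨huW, huC⟩ := hu
        by_cases hu0 : u = 0
        · simp [hu0]
        by_cases hsp : ∃ a : ℝ, u = a • v
        · obtain ⟨a, ha⟩ := hsp
          exact Submodule.mem_span_singleton.mpr ⟨a, ha.symm⟩
        · push_neg at hsp
          exact absurd (key u huW (fun i hi => by
            by_contra hvi
            exact hi (huC i (by simp [hvi]))) hu0 hsp) (fun h => h)
      · rw [Submodule.span_le, Set.singleton_subset_iff]
        exact ⟨hvW, fun i hi => not_not.mp (by simpa using hi)⟩
    rw [hspan]
    exact finrank_span_singleton hv0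
  · -- minimality
    intro C' hC' hfr
    have : Nontrivial ↥(W ⊓ coordSubspace C') :=
      Module.finrank_pos_iff.mp (by rw [hfr]; norm_num)
    obtain ⟨u, hu_ne⟩ := exists_ne (0 : ↥(W ⊓ coordSubspace C'))
    have huW : (u : Fin n → ℝ) ∈ W := u.2.1
    have huC : ∀ i ∉ C', (u : Fin n → ℝ) i = 0 := u.2.2
    have hu0 : (u : Fin n → ℝ) ≠ 0 := fun h => hu_ne (Subtype.ext h)
    have husupp : ∀ i, (u : Fin n → ℝ) i ≠ 0 → v i ≠ 0 := by
      intro i hi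
      have hiC' : i ∈ C' := by
        by_contra h
        exact hi (huC i h)
      exact hC'.1 hiC'
    have hnm : ∀ a : ℝ, (u : Fin n → ℝ) ≠ a • v := by
      intro a ha
      have ha0 : a ≠ 0 := by
        rintro rfl
        rw [zero_smul] at ha
        exact hu0 ha
      obtain ⟨i, hiv, hiC'⟩ := Set.exists_of_ssubset hC'
      have : (u : Fin n → ℝ) i = 0 := huC i hiC'
      rw [ha] at this
      simp only [Pi.smul_apply, smul_eq_mul] at this
      exact (hiv : v i ≠ 0) (by
        rcases mul_eq_zero.mp this with h | h
        · exact absurd h ha0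
        · exact h)
    exact key u huW husupp hu0 hnm

/-- Conformal circuit decomposition. -/
lemma exists_decomp_aux : ∀ (N : ℕ) (z : Fin n → ℝ), z ∈ W →
    (Finset.univ.filter (fun i => z i ≠ 0)).card ≤ N →
    ∃ (k : ℕ) (h : Fin k → (Fin n → ℝ)), z = ∑ j, h j ∧
      ∀ j, h j ∈ W ∧ h j ≠ 0 ∧ SignConsistent (h j) z ∧ IsCircuit W {i | h j i ≠ 0} := by
  intro N
  induction N with
  | zero =>
    intro z hz hcard
    have hz0 : z = 0 := by
      have h0 : ∀ i, z i = 0 := by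
        intro i
        by_contra hi
        have hmem : i ∈ Finset.univ.filter (fun i => z i ≠ 0) := by simp [hi]
        have := Finset.card_pos.mpr ⟨i, hmem⟩
        omega
      funext i
      rw [h0 i, Pi.zero_apply]
    exact ⟨0, Fin.elim0, by simp [hz0], fun j => j.elim0⟩
  | succ N ih =>
    intro z hz hcard
    by_cases hz0 : z = 0
    · exact ⟨0, Fin.elim0, by simp [hz0], fun j => j.elim0⟩
    obtain ⟨v, hvW, hv0, hvz, hvcirc⟩ := exists_conformal_circuit hz hz0
    have hpos : ∀ i, v i ≠ 0 → 0 < v i * z i := by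
      intro i hi
      have h1 := hvz.1 i
      have h2 : z i ≠ 0 := fun h => hi (hvz.2 i h)
      rcases lt_or_eq_of_le h1 with h | h
      · linarith [h]
      · exact absurd h.symm (mul_ne_zero h2 hi)
    set S : Finset (Fin n) := Finset.univ.filter (fun i => v i ≠ 0) with hS
    have hSne : S.Nonempty := by
      obtain ⟨i, hi⟩ : ∃ i, v i ≠ 0 := by
        by_contra h; push_neg at h; exact hv0 (funext h)
      exact ⟨i, by simp [hS, hi]⟩
    obtain ⟨i₀, hi₀S, hi₀min⟩ := S.exists_min_image (fun i => z i / v i) hSne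
    have hvi₀ : v i₀ ≠ 0 := by simpa [hS] using hi₀S
    have hpos₀ : 0 < v i₀ * z i₀ := hpos i₀ hvi₀
    have hzi₀ : z i₀ ≠ 0 := fun h => by simp [h] at hpos₀
    set mu : ℝ := z i₀ / v i₀ with hmu
    have hmupos : 0 < mu := by
      rw [hmu, div_pos_iff]
      rcases lt_trichotomy (v i₀) 0 with h | h | h
      · right; constructor <;> nlinarith
      · exact absurd h hvi₀
      · left; constructor <;> nlinarith
    set z' : Fin n → ℝ := z - mu • v with hz'
    have hz'W : z' ∈ W := sub_mem hz (Submodule.smul_mem _ _ hvW)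
    have hz'sc : SignConsistent z' z := by
      constructor
      · intro i
        simp only [hz', Pi.sub_apply, Pi.smul_apply, smul_eq_mul]
        by_cases hvi : v i = 0
        · simp [hvi]; nlinarith [sq_nonneg (z i)]
        · have hiS : i ∈ S := by simp [hS, hvi]
          have hle := hi₀min i hiS
          have hvzi := hpos i hvi
          have : mu * (v i * z i) ≤ z i / v i * (v i * z i) :=
            mul_le_mul_of_nonneg_right hle hvzi.le
          have heq : z i / v i * (v i * z i) = z i * z i := by field_simp
          nlinarith
      · intro i hzi
        have hvi : v i = 0 := hvz.2 i hzi
        simp [hz', hzi, hvi]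
    have hz'supp : ∀ i, z i = 0 → z' i = 0 := fun i h => hz'sc.2 i h
    have hz'i₀ : z' i₀ = 0 := by
      simp only [hz', Pi.sub_apply, Pi.smul_apply, smul_eq_mul, hmu]
      field_simp
      ring
    have hcard' : (Finset.univ.filter (fun i => z' i ≠ 0)).card ≤ N := by
      have hss : (Finset.univ.filter (fun i => z' i ≠ 0)) ⊂
          (Finset.univ.filter (fun i => z i ≠ 0)) := by
        refine Finset.ssubset_iff_of_subset ?_ |>.mpr ⟨i₀, by simp [hzi₀], by simp [hz'i₀]⟩
        intro j hj
        simp only [Finset.mem_filter, Finset.mem_univ, true_and] at hj ⊢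
        intro h
        exact hj (hz'supp j h)
      have := Finset.card_lt_card hss
      omega
    obtain ⟨k, h, hsum, hprops⟩ := ih z' hz'W hcard'
    refine ⟨k + 1, Fin.cons (mu • v) h, ?_, ?_⟩
    · rw [Fin.sum_cons, ← hsum]
      simp [hz']
    · intro j
      refine Fin.cases ?_ ?_ j
      · simp only [Fin.cons_zero]
        refine ⟨Submodule.smul_mem _ _ hvW, smul_ne_zero hmupos.ne' hv0, sc_smul hvz hmupos.le, ?_⟩
        have hset : {i | (mu • v) i ≠ 0} = {i | v i ≠ 0} := by
          ext i
          simp [Pi.smul_apply, smul_eq_mul, hmupos.ne']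
        rw [hset]
        exact hvcirc
      · intro j'
        simp only [Fin.cons_succ]
        obtain ⟨h1, h2, h3, h4⟩ := hprops j'
        exact ⟨h1, h2, sc_trans hz'sc h3, h4⟩

lemma exists_decomp {z : Fin n → ℝ} (hz : z ∈ W) :
    ∃ (k : ℕ) (h : Fin k → (Fin n → ℝ)), z = ∑ j, h j ∧
      ∀ j, h j ∈ W ∧ h j ≠ 0 ∧ SignConsistent (h j) z ∧ IsCircuit W {i | h j i ≠ 0} :=
  exists_decomp_aux _ z hz le_rfl

end Aux3
section Aux4

open Finset

attribute [local instance] Classical.propDecidable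

variable {n : ℕ} {W : Submodule ℝ (Fin n → ℝ)}

lemma csSup_const_mul {s : Set ℝ} (hs : s.Finite) (hne : s.Nonempty) {c : ℝ} (hc : 0 ≤ c) :
    sSup ((fun t => c * t) '' s) = c * sSup s := by
  apply le_antisymm
  · refine csSup_le (hne.image _) ?_
    rintro _ ⟨x, hx, rfl⟩
    exact mul_le_mul_of_nonneg_left (le_csSup hs.bddAbove hx) hc
  · exact le_csSup ((hs.image _).bddAbove) ⟨sSup s, hne.csSup_mem hs, rfl⟩

lemma csInf_const_mul {s : Set ℝ} (hs : s.Finite) (hne : s.Nonempty) {c : ℝ} (hc : 0 ≤ c) :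
    sInf ((fun t => c * t) '' s) = c * sInf s := by
  apply le_antisymm
  · exact csInf_le ((hs.image _).bddBelow) ⟨sInf s, hne.csInf_mem hs, rfl⟩
  · refine le_csInf (hne.image _) ?_
    rintro _ ⟨x, hx, rfl⟩
    exact mul_le_mul_of_nonneg_left (csInf_le hs.bddBelow hx) hc

/-- Any two full-support vectors of a circuit are proportional. -/
lemma circuit_proportional {C : Set (Fin n)} (hC : IsCircuit W C) {g g' : Fin n → ℝ}
    (hg : g ∈ W) (hgs : {i | g i ≠ 0} = C)
    (hg' : g' ∈ W) (hg0' : g' ≠ 0) (hgs' : {i | g' i ≠ 0} = C) :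
    ∃ a : ℝ, g = a • g' := by
  have hg'mem : g' ∈ W ⊓ coordSubspace C := by
    refine ⟨hg', fun i hi => ?_⟩
    by_contra h
    exact hi (hgs' ▸ h)
  have hgmem : g ∈ W ⊓ coordSubspace C := by
    refine ⟨hg, fun i hi => ?_⟩
    by_contra h
    exact hi (hgs ▸ h)
  have hle : Submodule.span ℝ {g'} ≤ W ⊓ coordSubspace C := by
    rw [Submodule.span_le, Set.singleton_subset_iff]; exact hg'mem
  have heq : Submodule.span ℝ {g'} = W ⊓ coordSubspace C := by
    apply Submodule.eq_of_le_of_finrank_le hle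
    rw [hC.1, finrank_span_singleton hg0']
  obtain ⟨a, ha⟩ := Submodule.mem_span_singleton.mp (heq ▸ hgmem)
  exact ⟨a, ha.symm⟩

noncomputable def ratioOf (g : Fin n → ℝ) (C : Set (Fin n)) : ℝ :=
  sSup ((fun i => |g i|) '' C) / sInf ((fun i => |g i|) '' C)

lemma ratio_indep {C : Set (Fin n)} (hC : IsCircuit W C) {g g' : Fin n → ℝ}
    (hg : g ∈ W) (hg0 : g ≠ 0) (hgs : {i | g i ≠ 0} = C)
    (hg' : g' ∈ W) (hg0' : g' ≠ 0) (hgs' : {i | g' i ≠ 0} = C) :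
    ratioOf g C = ratioOf g' C := by
  obtain ⟨a, ha⟩ := circuit_proportional hC hg hgs hg' hg0' hgs'
  have ha0 : a ≠ 0 := by
    rintro rfl
    rw [zero_smul] at ha
    exact hg0 ha
  have hCne : C.Nonempty := by
    obtain ⟨i, hi⟩ : ∃ i, g i ≠ 0 := by
      by_contra h; push_neg at h; exact hg0 (funext h)
    exact ⟨i, hgs ▸ hi⟩
  have hCfin : C.Finite := Set.toFinite C
  have himg : (fun i => |g i|) '' C = (fun t => |a| * t) '' ((fun i => |g' i|) '' C) := by
    rw [Set.image_image]
    apply Set.image_congr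
    intro i _
    rw [ha]
    simp [abs_mul]
  unfold ratioOf
  rw [himg, csSup_const_mul (hCfin.image _) (hCne.image _) (abs_nonneg a),
    csInf_const_mul (hCfin.image _) (hCne.image _) (abs_nonneg a),
    mul_div_mul_left _ _ (abs_ne_zero.mpr ha0)]

lemma kappaSet_finite :
    (({1} : Set ℝ) ∪ {r | ∃ C : Set (Fin n), IsCircuit W C ∧ ∃ g ∈ W, g ≠ 0 ∧ {i | g i ≠ 0} = C ∧
      r = sSup ((fun i => |g i|) '' C) / sInf ((fun i => |g i|) '' C)}).Finite := by
  apply Set.Finite.union (Set.finite_singleton 1)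
  have : {r : ℝ | ∃ C : Set (Fin n), IsCircuit W C ∧ ∃ g ∈ W, g ≠ 0 ∧ {i | g i ≠ 0} = C ∧
      r = sSup ((fun i => |g i|) '' C) / sInf ((fun i => |g i|) '' C)} ⊆
      (fun C : Set (Fin n) => if h : ∃ g, g ∈ W ∧ g ≠ 0 ∧ {i | g i ≠ 0} = C then
        ratioOf h.choose C else 0) '' Set.univ := by
    rintro r ⟨C, hC, g, hg, hg0, hgs, rfl⟩
    refine ⟨C, Set.mem_univ C, ?_⟩
    have hex : ∃ g, g ∈ W ∧ g ≠ 0 ∧ {i | g i ≠ 0} = C := ⟨g, hg, hg0, hgs⟩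
    beta_reduce
    rw [dif_pos hex]
    obtain ⟨h1, h2, h3⟩ := hex.choose_spec
    exact (ratio_indep hC h1 h2 h3 hg hg0 hgs)
  exact Set.Finite.subset (Set.Finite.image _ (Set.finite_univ)) this

lemma one_le_kappa : 1 ≤ kappa W := by
  apply le_csSup (kappaSet_finite.bddAbove)
  exact Set.mem_union_left _ rfl

lemma kappa_nonneg : (0:ℝ) ≤ kappa W := le_trans zero_le_one one_le_kappa

/-- The circuit imbalance bound: coordinates of a circuit vector differ by at most `κ`. -/
lemma kappa_ratio {C : Set (Fin n)} (hC : IsCircuit W C) {g : Fin n → ℝ}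
    (hg : g ∈ W) (hg0 : g ≠ 0) (hgs : {i | g i ≠ 0} = C) {i j : Fin n}
    (hi : i ∈ C) (hj : j ∈ C) : |g i| ≤ kappa W * |g j| := by
  set img : Set ℝ := (fun i => |g i|) '' C with himg
  have hCfin : C.Finite := Set.toFinite C
  have hfin : img.Finite := hCfin.image _
  have hne : img.Nonempty := ⟨|g i|, ⟨i, hi, rfl⟩⟩
  have hpos : ∀ t ∈ img, 0 < t := by
    rintro _ ⟨l, hl, rfl⟩
    have : g l ≠ 0 := by rw [← hgs] at hl; exact hl
    exact abs_pos.mpr this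
  have hInf_mem : sInf img ∈ img := hne.csInf_mem hfin
  have hInf_pos : 0 < sInf img := hpos _ hInf_mem
  have hSup_mem : sSup img ∈ img := hne.csSup_mem hfin
  have hr : sSup img / sInf img ≤ kappa W := by
    apply le_csSup (kappaSet_finite.bddAbove)
    exact Set.mem_union_right _ ⟨C, hC, g, hg, hg0, hgs, rfl⟩
  have h1 : |g i| ≤ sSup img := le_csSup hfin.bddAbove ⟨i, hi, rfl⟩
  have h2 : sInf img ≤ |g j| := csInf_le hfin.bddBelow ⟨j, hj, rfl⟩
  have h3 : sSup img = (sSup img / sInf img) * sInf img := by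
    field_simp
  have hSup_pos : 0 < sSup img := hpos _ hSup_mem
  have hrpos : 0 ≤ sSup img / sInf img := (div_pos hSup_pos hInf_pos).le
  calc |g i| ≤ sSup img := h1
    _ = (sSup img / sInf img) * sInf img := h3
    _ ≤ (sSup img / sInf img) * |g j| := by
        apply mul_le_mul_of_nonneg_left h2 hrpos
    _ ≤ kappa W * |g j| := by
        apply mul_le_mul_of_nonneg_right hr (abs_nonneg _)

/-- Every circuit has a vector with full support on it. -/
lemma circuit_exists_fullsupp {C : Set (Fin n)} (hC : IsCircuit W C) :
    ∃ g, g ∈ W ∧ g ≠ 0 ∧ {i | g i ≠ 0} = C := by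
  have : Nontrivial ↥(W ⊓ coordSubspace C) :=
    Module.finrank_pos_iff.mp (by rw [hC.1]; norm_num)
  obtain ⟨u, hu_ne⟩ := exists_ne (0 : ↥(W ⊓ coordSubspace C))
  have hu0 : (u : Fin n → ℝ) ≠ 0 := fun h => hu_ne (Subtype.ext h)
  have hsub : {i | (u : Fin n → ℝ) i ≠ 0} ⊆ C := by
    intro i hi
    by_contra h
    exact hi (u.2.2 i h)
  refine ⟨u, u.2.1, hu0, ?_⟩
  by_contra hne
  have hss : {i | (u : Fin n → ℝ) i ≠ 0} ⊂ C := lt_of_le_of_ne hsub hne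
  have hle1 : Module.finrank ℝ ↥(W ⊓ coordSubspace {i | (u : Fin n → ℝ) i ≠ 0}) ≤ 1 := by
    rw [← hC.1]
    apply Submodule.finrank_mono
    apply inf_le_inf_left
    intro x hx i hi
    exact hx i (fun hh => hi (hsub hh))
  have hge1 : 0 < Module.finrank ℝ ↥(W ⊓ coordSubspace {i | (u : Fin n → ℝ) i ≠ 0}) := by
    rw [Module.finrank_pos_iff]
    refine ⟨⟨⟨u, u.2.1, fun i hi => not_not.mp (by simpa using hi)⟩, 0, ?_⟩⟩
    intro h
    exact hu0 (by simpa using congrArg Subtype.val h)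
  exact hC.2 _ hss (by omega)

end Aux4
section Aux5

open Finset

attribute [local instance] Classical.propDecidable

variable {n : ℕ} {W : Submodule ℝ (Fin n → ℝ)}

lemma mem_orthComp {y : Fin n → ℝ} :
    y ∈ orthComp W ↔ ∀ x ∈ W, ∑ i, x i * y i = 0 := Iff.rfl

lemma pairing_eq {c s : Fin n → ℝ} (hs : s - c ∈ orthComp W) {h : Fin n → ℝ} (hh : h ∈ W) :
    ∑ i, c i * h i = ∑ i, s i * h i := by
  have h0 : ∑ i, h i * (s - c) i = 0 := mem_orthComp.mp hs h hh
  have expand : ∑ i, h i * (s - c) i = ∑ i, s i * h i - ∑ i, c i * h i := by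
    rw [← Finset.sum_sub_distrib]
    exact Finset.sum_congr rfl fun i _ => by simp only [Pi.sub_apply]; ring
  rw [expand] at h0
  linarith

lemma isClosed_feasible (d : Fin n → ℝ) :
    IsClosed {x : Fin n → ℝ | x - d ∈ W ∧ ∀ i, 0 ≤ x i} := by
  have h1 : IsClosed {x : Fin n → ℝ | x - d ∈ W} := by
    have : {x : Fin n → ℝ | x - d ∈ W} = (fun x => x - d) ⁻¹' (W : Set (Fin n → ℝ)) := rfl
    rw [this]
    exact IsClosed.preimage (continuous_id.sub continuous_const) W.closed_of_finiteDimensional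
  have h2 : IsClosed {x : Fin n → ℝ | ∀ i, 0 ≤ x i} := by
    have : {x : Fin n → ℝ | ∀ i, 0 ≤ x i} = ⋂ i, {x : Fin n → ℝ | 0 ≤ x i} := by
      ext x; simp [Set.mem_iInter]
    rw [this]
    exact isClosed_iInter fun i => isClosed_le continuous_const (continuous_apply i)
  exact h1.inter h2

lemma continuous_pairing (s : Fin n → ℝ) : Continuous (fun x : Fin n → ℝ => ∑ i, s i * x i) :=
  continuous_finset_sum _ fun i _ => continuous_const.mul (continuous_apply i)

lemma exists_optimal {c d s : Fin n → ℝ} (hs : s - c ∈ orthComp W) (hs0 : ∀ i, 0 ≤ s i)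
    (hfeas : ∃ x : Fin n → ℝ, x - d ∈ W ∧ ∀ i, 0 ≤ x i) :
    ∃ xs : Fin n → ℝ, (xs - d ∈ W ∧ ∀ i, 0 ≤ xs i) ∧
      ∀ y : Fin n → ℝ, y - d ∈ W → (∀ i, 0 ≤ y i) →
        ∑ i, c i * xs i ≤ ∑ i, c i * y i := by
  classical
  obtain ⟨x₀, hx₀W, hx₀0⟩ := hfeas
  rcases Nat.eq_zero_or_pos n with hn | hn
  · subst hn
    exact ⟨x₀, ⟨hx₀W, hx₀0⟩, fun y _ _ => by simp⟩
  haveI : Nonempty (Fin n) := ⟨⟨0, hn⟩⟩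
  set f : (Fin n → ℝ) → ℝ := fun x => ∑ i, s i * x i with hf
  set B : ℝ := ∑ i, x₀ i with hB
  have hB0 : 0 ≤ B := Finset.sum_nonneg fun i _ => hx₀0 i
  have hx₀B : ∀ i, x₀ i ≤ B := fun i =>
    Finset.single_le_sum (fun j _ => hx₀0 j) (Finset.mem_univ i)
  set R : ℝ := (1 + kappa W) * B with hR
  have hBR : B ≤ R := by nlinarith [kappa_nonneg (W := W)]
  set K : Set (Fin n → ℝ) := {x : Fin n → ℝ | x - d ∈ W ∧ ∀ i, 0 ≤ x i} ∩
    Set.pi Set.univ (fun _ => Set.Icc 0 R) with hK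
  have hKcomp : IsCompact K :=
    IsCompact.of_isClosed_subset (isCompact_univ_pi fun _ => isCompact_Icc)
      ((isClosed_feasible d).inter (isClosed_set_pi fun i _ => isClosed_Icc))
      Set.inter_subset_right
  have hx₀K : x₀ ∈ K := ⟨⟨hx₀W, hx₀0⟩, fun i _ => ⟨hx₀0 i, le_trans (hx₀B i) hBR⟩⟩
  obtain ⟨xs, hxsK, hxsmin⟩ := hKcomp.exists_isMinOn ⟨x₀, hx₀K⟩
    (continuous_pairing s).continuousOn
  have hglob : ∀ y : Fin n → ℝ, y - d ∈ W → (∀ i, 0 ≤ y i) → f xs ≤ f y := by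
    intro y hyW hy0
    have hzW : y - x₀ ∈ W := by
      have := sub_mem hyW hx₀W
      simpa [sub_sub_sub_cancel_right] using this
    obtain ⟨k, h, hsum, hprops⟩ := exists_decomp hzW
    have hzl : ∀ l, y l - x₀ l = ∑ j, h j l := by
      intro l
      have := congrFun hsum l
      simpa [Finset.sum_apply] using this
    -- sign facts
    have habs : ∀ l, ∑ j, |h j l| = |y l - x₀ l| := by
      intro l
      have := abs_sum_of_sc (fun j => (hprops j).2.2.1) hsum l
      simpa using this
    have hsg : ∀ (j : Fin k) (l : Fin n), 0 ≤ y l - x₀ l → 0 ≤ h j l := by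
      intro j l hl
      have h1 := ((hprops j).2.2.1).1 l
      have h2 := ((hprops j).2.2.1).2 l
      simp only [Pi.sub_apply] at h1 h2
      rcases eq_or_lt_of_le hl with he | hlt
      · rw [h2 he.symm]
      · nlinarith
    have hsg' : ∀ (j : Fin k) (l : Fin n), y l - x₀ l ≤ 0 → h j l ≤ 0 := by
      intro j l hl
      have h1 := ((hprops j).2.2.1).1 l
      have h2 := ((hprops j).2.2.1).2 l
      simp only [Pi.sub_apply] at h1 h2
      rcases eq_or_lt_of_le hl with he | hlt
      · rw [h2 he]
      · nlinarith
    set J : Finset (Fin k) := Finset.univ.filter (fun j => ∑ i, s i * h j i < 0) with hJ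
    -- witnesses
    have hwit : ∀ j ∈ J, ∃ l, h j l ≠ 0 ∧ (∑ j', |h j' l|) ≤ x₀ l := by
      intro j hj
      have hneg : ∑ i, s i * h j i < 0 := by
        simpa [hJ] using hj
      have : ∃ l, s l * h j l < 0 := by
        by_contra hc
        push_neg at hc
        exact absurd (Finset.sum_nonneg fun l _ => hc l) (not_le.mpr hneg)
      obtain ⟨l, hl⟩ := this
      have hsl : 0 < s l := by
        rcases lt_or_eq_of_le (hs0 l) with h' | h'
        · exact h'
        · rw [← h'] at hl; simp at hl
      have hhl : h j l < 0 := by nlinarith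
      have hzneg : y l - x₀ l < 0 := by
        have h1 := ((hprops j).2.2.1).1 l
        have h2 := ((hprops j).2.2.1).2 l
        simp only [Pi.sub_apply] at h1 h2
        rcases lt_trichotomy (y l - x₀ l) 0 with hc | hc | hc
        · exact hc
        · exact absurd (h2 hc) hhl.ne
        · nlinarith
      refine ⟨l, hhl.ne, ?_⟩
      rw [habs l, abs_of_neg hzneg]
      linarith [hy0 l]
    set P : Fin k → Fin n → Prop := fun j l => h j l ≠ 0 ∧ (∑ j', |h j' l|) ≤ x₀ l with hP
    set ψ : Fin k → Fin n := fun j => if hj : ∃ l, P j l then hj.choose else Classical.arbitrary _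
      with hψdef
    have hψ : ∀ j ∈ J, P j (ψ j) := by
      intro j hj
      obtain ⟨l, hl⟩ := hwit j hj
      have hex : ∃ l, P j l := ⟨l, hl⟩
      simp only [hψdef, dif_pos hex]
      exact hex.choose_spec
    have hkb : ∀ j ∈ J, ∀ l, |h j l| ≤ kappa W * |h j (ψ j)| := by
      intro j hj l
      by_cases hl : h j l = 0
      · rw [hl, abs_zero]
        exact mul_nonneg kappa_nonneg (abs_nonneg _)
      · exact kappa_ratio (hprops j).2.2.2 (hprops j).1 (hprops j).2.1 rfl hl (hψ j hj).1
    have hchargesum : ∑ j ∈ J, |h j (ψ j)| ≤ B := by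
      rw [← Finset.sum_fiberwise_of_maps_to (g := ψ) (t := Finset.univ)
        (fun j _ => Finset.mem_univ (ψ j))]
      rw [hB]
      apply Finset.sum_le_sum
      intro l _
      by_cases hne : (J.filter (fun j => ψ j = l)).Nonempty
      · obtain ⟨j₀, hj₀⟩ := hne
        have hj₀J : j₀ ∈ J := Finset.mem_filter.mp hj₀ |>.1
        have hj₀l : ψ j₀ = l := Finset.mem_filter.mp hj₀ |>.2
        have hsum_eq : ∑ j ∈ J.filter (fun j => ψ j = l), |h j (ψ j)| =
            ∑ j ∈ J.filter (fun j => ψ j = l), |h j l| := by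
          apply Finset.sum_congr rfl
          intro j hj
          rw [Finset.mem_filter.mp hj |>.2]
        rw [hsum_eq]
        calc ∑ j ∈ J.filter (fun j => ψ j = l), |h j l|
            ≤ ∑ j, |h j l| := Finset.sum_le_sum_of_subset_of_nonneg
              (Finset.subset_univ _) (fun j _ _ => abs_nonneg _)
          _ ≤ x₀ l := by
              have := (hψ j₀ hj₀J).2
              rw [hj₀l] at this
              exact this
      · rw [Finset.not_nonempty_iff_eq_empty.mp hne]
        simp [hx₀0 l]
    set yJ : Fin n → ℝ := x₀ + ∑ j ∈ J, h j with hyJ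
    have hyJl : ∀ l, yJ l = x₀ l + ∑ j ∈ J, h j l := by
      intro l
      simp [hyJ, Finset.sum_apply]
    have hsum_split : ∀ l, ∑ j ∈ Finset.univ \ J, h j l + ∑ j ∈ J, h j l = ∑ j, h j l :=
      fun l => Finset.sum_sdiff (Finset.subset_univ J)
    -- feasibility of yJ
    have hyJfeas : yJ - d ∈ W := by
      have : yJ - d = (x₀ - d) + ∑ j ∈ J, h j := by
        rw [hyJ]; abel
      rw [this]
      exact add_mem hx₀W (Submodule.sum_mem _ fun j _ => (hprops j).1)
    have hyJ0 : ∀ l, 0 ≤ yJ l := by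
      intro l
      rw [hyJl l]
      rcases le_or_gt 0 (y l - x₀ l) with hc | hc
      · have : 0 ≤ ∑ j ∈ J, h j l := Finset.sum_nonneg fun j _ => hsg j l hc
        linarith [hx₀0 l]
      · have h1 : ∑ j ∈ Finset.univ \ J, h j l ≤ 0 :=
          Finset.sum_nonpos fun j _ => hsg' j l hc.le
        have h2 := hsum_split l
        have h3 := hzl l
        have := hy0 l
        linarith
    have hyJR : ∀ l, yJ l ≤ R := by
      intro l
      rw [hyJl l]
      rcases le_or_gt (y l - x₀ l) 0 with hc | hc
      · have : ∑ j ∈ J, h j l ≤ 0 := Finset.sum_nonpos fun j _ => hsg' j l hc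
        have := hx₀B l
        rw [hR]
        nlinarith [kappa_nonneg (W := W), hB0]
      · have h1 : ∑ j ∈ J, h j l ≤ ∑ j ∈ J, |h j l| :=
          Finset.sum_le_sum fun j _ => le_abs_self _
        have h2 : ∑ j ∈ J, |h j l| ≤ ∑ j ∈ J, kappa W * |h j (ψ j)| :=
          Finset.sum_le_sum fun j hj => hkb j hj l
        have h3 : ∑ j ∈ J, kappa W * |h j (ψ j)| = kappa W * ∑ j ∈ J, |h j (ψ j)| :=
          (Finset.mul_sum _ _ _).symm
        have h4 : kappa W * ∑ j ∈ J, |h j (ψ j)| ≤ kappa W * B :=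
          mul_le_mul_of_nonneg_left hchargesum kappa_nonneg
        have := hx₀B l
        rw [hR]
        nlinarith
    -- cost comparison
    have hlin : ∀ (A : Finset (Fin k)), f (x₀ + ∑ j ∈ A, h j) =
        f x₀ + ∑ j ∈ A, ∑ i, s i * h j i := by
      intro A
      simp only [hf]
      have hterm : ∀ i, s i * (x₀ + ∑ j ∈ A, h j) i = s i * x₀ i + ∑ j ∈ A, s i * h j i := by
        intro i
        simp [Finset.sum_apply, Finset.mul_sum, mul_add]
      rw [Finset.sum_congr rfl (fun i _ => hterm i), Finset.sum_add_distrib, Finset.sum_comm]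
    have hyeq : y = x₀ + ∑ j, h j := by
      rw [← hsum]; abel
    have hcost : f yJ ≤ f y := by
      rw [hyeq, hyJ, hlin, hlin]
      have : ∑ j ∈ J, ∑ i, s i * h j i ≤ ∑ j, ∑ i, s i * h j i := by
        have hpos : 0 ≤ ∑ j ∈ Finset.univ \ J, ∑ i, s i * h j i := by
          apply Finset.sum_nonneg
          intro j hj
          have : j ∉ J := (Finset.mem_sdiff.mp hj).2
          simp only [hJ, Finset.mem_filter, Finset.mem_univ, true_and, not_lt] at this
          exact this
        have := Finset.sum_sdiff (f := fun j => ∑ i, s i * h j i) (Finset.subset_univ J)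
        linarith
      linarith
    have hyJK : yJ ∈ K := ⟨⟨hyJfeas, hyJ0⟩, fun l _ => ⟨hyJ0 l, hyJR l⟩⟩
    calc f xs ≤ f yJ := hxsmin hyJK
      _ ≤ f y := hcost
  refine ⟨xs, hxsK.1, ?_⟩
  intro y hyW hy0
  have hd : ∑ i, c i * (xs - y) i = ∑ i, s i * (xs - y) i :=
    pairing_eq hs (by simpa [sub_sub_sub_cancel_right] using sub_mem hxsK.1.1 hyW)
  have hexp : ∀ t : Fin n → ℝ, ∑ i, t i * (xs - y) i = ∑ i, t i * xs i - ∑ i, t i * y i := by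
    intro t
    rw [← Finset.sum_sub_distrib]
    exact Finset.sum_congr rfl fun i _ => by simp only [Pi.sub_apply]; ring
  rw [hexp c, hexp s] at hd
  have := hglob y hyW hy0
  simp only [hf] at this
  linarith

end Aux5
section Aux6

open Finset

attribute [local instance] Classical.propDecidable

variable {n : ℕ} {W : Submodule ℝ (Fin n → ℝ)}

lemma abs_sub_conf {zl hl t : ℝ} (h1 : 0 ≤ zl * hl) (h2 : zl = 0 → hl = 0)
    (h3 : |hl| ≤ |zl|) (ht0 : 0 < t) (ht1 : t ≤ 1) :
    |zl - t * hl| = |zl| - t * |hl| := by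
  rcases lt_trichotomy zl 0 with hz | hz | hz
  · have hhl : hl ≤ 0 := by nlinarith
    have hge : zl ≤ hl := by
      rw [abs_of_nonpos hhl, abs_of_neg hz] at h3
      linarith
    have h4 : zl - t * hl ≤ 0 := by nlinarith
    rw [abs_of_nonpos h4, abs_of_neg hz, abs_of_nonpos hhl]
    ring
  · rw [h2 hz, hz]
    simp
  · have hhl : 0 ≤ hl := by nlinarith
    have hge : hl ≤ zl := by
      rw [abs_of_nonneg hhl, abs_of_pos hz] at h3
      linarith
    have h4 : 0 ≤ zl - t * hl := by nlinarith
    rw [abs_of_nonneg h4, abs_of_pos hz, abs_of_nonneg hhl]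

lemma proximity {c d dt xt s : Fin n → ℝ}
    (hs : s - c ∈ orthComp W) (hs0 : ∀ i, 0 ≤ s i)
    (hxtW : xt - dt ∈ W) (hxt0 : ∀ i, 0 ≤ xt i)
    (hcomp : ∀ i, 0 < xt i → s i = 0)
    (hfeas : ∃ x : Fin n → ℝ, x - d ∈ W ∧ ∀ i, 0 ≤ x i) :
    ∃ x' : Fin n → ℝ, (x' - d ∈ W ∧ ∀ i, 0 ≤ x' i) ∧
      (∀ y : Fin n → ℝ, y - d ∈ W → (∀ i, 0 ≤ y i) →
        ∑ i, c i * x' i ≤ ∑ i, c i * y i) ∧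
      ∀ i, |x' i - xt i| ≤ (kappa W + 1) * norm1 (d - dt) := by
  classical
  obtain ⟨xs, hxsfeas, hxsopt⟩ := exists_optimal (W := W) hs hs0 hfeas
  set p : Fin n → ℝ := d - dt with hp
  set del : ℝ := norm1 (d - dt) with hdel
  have hdel0 : 0 ≤ del := Finset.sum_nonneg fun i _ => abs_nonneg _
  have hpl : ∀ l, |p l| ≤ del := by
    intro l
    rw [hdel]
    exact Finset.single_le_sum (f := fun i => |(d - dt) i|) (fun i _ => abs_nonneg _)
      (Finset.mem_univ l)
  set a : Fin n → ℝ := xt + p with ha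
  set m : ℝ := ∑ i, c i * xs i with hm
  set Opt : Set (Fin n → ℝ) :=
    {x | (x - d ∈ W ∧ ∀ i, 0 ≤ x i) ∧ ∑ i, c i * x i ≤ m} with hOpt
  have hOptopt : ∀ x ∈ Opt, ∀ y : Fin n → ℝ, y - d ∈ W → (∀ i, 0 ≤ y i) →
      ∑ i, c i * x i ≤ ∑ i, c i * y i := by
    intro x hx y hyW hy0
    exact le_trans hx.2 (hxsopt y hyW hy0)
  have hxsOpt : xs ∈ Opt := ⟨hxsfeas, le_refl m⟩
  set g : (Fin n → ℝ) → ℝ := fun x => ∑ l, |x l - a l| with hg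
  have hgcont : Continuous g := by
    apply continuous_finset_sum
    intro l _
    exact ((continuous_apply l).sub continuous_const).abs
  set R₀ : ℝ := g xs with hR₀
  have hR₀0 : 0 ≤ R₀ := by
    rw [hR₀, hg]
    exact Finset.sum_nonneg fun l _ => abs_nonneg _
  have hgball : ∀ x : Fin n → ℝ, ∀ l, |x l - a l| ≤ g x := by
    intro x l
    exact Finset.single_le_sum (f := fun l => |x l - a l|) (fun i _ => abs_nonneg _)
      (Finset.mem_univ l)
  set K : Set (Fin n → ℝ) := Opt ∩ Set.pi Set.univ (fun l => Set.Icc (a l - R₀) (a l + R₀))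
    with hK
  have hOptclosed : IsClosed Opt := by
    have : Opt = {x : Fin n → ℝ | x - d ∈ W ∧ ∀ i, 0 ≤ x i} ∩
        {x : Fin n → ℝ | ∑ i, c i * x i ≤ m} := rfl
    rw [this]
    exact (isClosed_feasible d).inter (isClosed_le (continuous_pairing c) continuous_const)
  have hKcomp : IsCompact K :=
    IsCompact.of_isClosed_subset (isCompact_univ_pi fun _ => isCompact_Icc)
      (hOptclosed.inter (isClosed_set_pi fun i _ => isClosed_Icc))
      Set.inter_subset_right
  have hxsK : xs ∈ K := by
    refine ⟨hxsOpt, fun l _ => ?_⟩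
    have := hgball xs l
    rw [← hR₀] at this
    rw [Set.mem_Icc]
    constructor <;> [linarith [abs_le.mp this]; linarith [(abs_le.mp this).2]]
  obtain ⟨x', hx'K, hx'min⟩ := hKcomp.exists_isMinOn ⟨xs, hxsK⟩ hgcont.continuousOn
  have hx'Opt : x' ∈ Opt := hx'K.1
  have hx'gxs : g x' ≤ g xs := hx'min hxsK
  have hgmin : ∀ y ∈ Opt, g x' ≤ g y := by
    intro y hy
    by_cases hyK : y ∈ K
    · exact hx'min hyK
    · have : ∃ l, y l ∉ Set.Icc (a l - R₀) (a l + R₀) := by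
        by_contra hc
        push_neg at hc
        exact hyK ⟨hy, fun l _ => hc l⟩
      obtain ⟨l, hl⟩ := this
      rw [Set.mem_Icc, not_and_or, not_le, not_le] at hl
      have habs : R₀ < |y l - a l| := by
        rcases hl with hl | hl
        · rw [abs_of_neg (by linarith)]; linarith
        · rw [abs_of_pos (by linarith)]; linarith
      calc g x' ≤ R₀ := hx'gxs
        _ ≤ |y l - a l| := habs.le
        _ ≤ g y := hgball y l
  -- the displacement
  set z : Fin n → ℝ := x' - a with hz
  have hzW : z ∈ W := by
    have h1 := sub_mem hx'Opt.1.1 hxtW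
    have : z = (x' - d) - (xt - dt) := by
      rw [hz, ha, hp]; abel
    rw [this]
    exact h1
  have hzl : ∀ l, z l = x' l - xt l - p l := by
    intro l
    simp [hz, ha, Pi.sub_apply, Pi.add_apply]
    ring
  obtain ⟨k, h, hsum, hprops⟩ := exists_decomp hzW
  have habs : ∀ l, ∑ j, |h j l| = |z l| :=
    fun l => abs_sum_of_sc (fun j => (hprops j).2.2.1) hsum l
  have hhsum : ∀ l, ∑ j, h j l = z l := by
    intro l
    have := congrFun hsum l
    simpa [Finset.sum_apply] using this.symm
  -- witnesses
  have hwit : ∀ j, ∃ l, h j l ≠ 0 ∧ |z l| ≤ |p l| := by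
    intro j
    have hscj := (hprops j).2.2.1
    by_cases hneg : ∑ i, s i * h j i < 0
    · have : ∃ l, s l * h j l < 0 := by
        by_contra hc
        push_neg at hc
        exact absurd (Finset.sum_nonneg fun l _ => hc l) (not_le.mpr hneg)
      obtain ⟨l, hl⟩ := this
      have hsl : 0 < s l := by
        rcases lt_or_eq_of_le (hs0 l) with h' | h'
        · exact h'
        · rw [← h'] at hl; simp at hl
      have hhl : h j l < 0 := by nlinarith
      have hxtl : xt l = 0 := by
        by_contra hc
        have : 0 < xt l := lt_of_le_of_ne (hxt0 l) (Ne.symm hc)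
        rw [hcomp l this] at hsl
        exact lt_irrefl 0 hsl
      have hzneg : z l < 0 := by
        have h1 := hscj.1 l
        have h2 := hscj.2 l
        rcases lt_trichotomy (z l) 0 with hc | hc | hc
        · exact hc
        · exact absurd (h2 hc) hhl.ne
        · nlinarith
      have hx'l : 0 ≤ x' l := hx'Opt.1.2 l
      have := hzl l
      refine ⟨l, hhl.ne, ?_⟩
      rw [abs_of_neg hzneg]
      have hple : -z l ≤ p l := by
        rw [hzl l] at hzneg ⊢
        linarith [hxtl ▸ this]
      linarith [le_abs_self (p l), hple]
    · push_neg at hneg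
      have ex0 : ∃ l, x' l = 0 ∧ 0 < h j l := by
        by_contra hc
        push_neg at hc
        have hposx : ∀ l, 0 < h j l → 0 < x' l := by
          intro l hl
          rcases lt_or_eq_of_le (hx'Opt.1.2 l) with h' | h'
          · exact h'
          · exact absurd hl (not_lt.mpr (hc l h'.symm))
        -- construct a feasible improving step
        set Sp : Finset (Fin n) := Finset.univ.filter (fun l => 0 < h j l) with hSp
        have hstep : ∃ t : ℝ, 0 < t ∧ t ≤ 1 ∧ ∀ l, 0 < h j l → t * h j l ≤ x' l := by
          by_cases hSpne : Sp.Nonempty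
          · obtain ⟨l₁, hl₁S, hl₁min⟩ := Sp.exists_min_image (fun l => x' l / h j l) hSpne
            have hl₁ : 0 < h j l₁ := by simpa [hSp] using hl₁S
            have hx1 : 0 < x' l₁ := hposx l₁ hl₁
            refine ⟨min 1 (x' l₁ / h j l₁), lt_min one_pos (div_pos hx1 hl₁), min_le_left _ _, ?_⟩
            intro l hl
            have hlS : l ∈ Sp := by simp [hSp, hl]
            have := hl₁min l hlS
            have hmle : min 1 (x' l₁ / h j l₁) ≤ x' l / h j l :=
              le_trans (min_le_right _ _) this
            calc min 1 (x' l₁ / h j l₁) * h j l ≤ (x' l / h j l) * h j l :=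
                  mul_le_mul_of_nonneg_right hmle hl.le
              _ = x' l := by field_simp
          · refine ⟨1, one_pos, le_refl 1, ?_⟩
            intro l hl
            exact absurd (by simp [hSp, hl] : l ∈ Sp) (Finset.not_nonempty_iff_eq_empty.mp hSpne ▸
              Finset.notMem_empty l)
        obtain ⟨t, ht0, ht1, htle⟩ := hstep
        set y' : Fin n → ℝ := x' - t • h j with hy'
        have hy'W : y' - d ∈ W := by
          have : y' - d = (x' - d) - t • h j := by rw [hy']; abel
          rw [this]
          exact sub_mem hx'Opt.1.1 (Submodule.smul_mem _ _ (hprops j).1)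
        have hy'0 : ∀ l, 0 ≤ y' l := by
          intro l
          simp only [hy', Pi.sub_apply, Pi.smul_apply, smul_eq_mul]
          rcases le_or_gt (h j l) 0 with h' | h'
          · nlinarith [hx'Opt.1.2 l]
          · linarith [htle l h']
        have hy'cost : ∑ i, c i * y' i ≤ m := by
          have hexp : ∑ i, c i * y' i = ∑ i, c i * x' i - t * ∑ i, c i * h j i := by
            rw [Finset.mul_sum, ← Finset.sum_sub_distrib]
            apply Finset.sum_congr rfl
            intro i _
            simp only [hy', Pi.sub_apply, Pi.smul_apply, smul_eq_mul]
            ring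
          rw [hexp, pairing_eq hs (hprops j).1]
          nlinarith [hx'Opt.2]
        have hy'Opt : y' ∈ Opt := ⟨⟨hy'W, hy'0⟩, hy'cost⟩
        -- ℓ1 strictly decreases
        have hgdec : g y' = g x' - t * ∑ l, |h j l| := by
          rw [hg, Finset.mul_sum, ← Finset.sum_sub_distrib]
          apply Finset.sum_congr rfl
          intro l _
          have h1 := (hprops j).2.2.1.1 l
          have h2 := (hprops j).2.2.1.2 l
          have h3 : |h j l| ≤ |z l| := by
            rw [← habs l]
            exact Finset.single_le_sum (f := fun j' => |h j' l|) (fun j' _ => abs_nonneg _)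
              (Finset.mem_univ j)
          have : y' l - a l = z l - t * h j l := by
            simp only [hy', Pi.sub_apply, Pi.smul_apply, smul_eq_mul, hz]
            ring
          rw [this]
          have hzeq : x' l - a l = z l := by simp [hz]
          rw [hzeq]
          exact abs_sub_conf h1 h2 h3 ht0 ht1
        have hpos : 0 < ∑ l, |h j l| := by
          obtain ⟨i₁, hi₁⟩ : ∃ i₁, h j i₁ ≠ 0 := by
            by_contra hcc
            push_neg at hcc
            exact (hprops j).2.1 (funext hcc)
          exact Finset.sum_pos' (fun l _ => abs_nonneg _)
            ⟨i₁, Finset.mem_univ i₁, abs_pos.mpr hi₁⟩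
        have := hgmin y' hy'Opt
        nlinarith
      obtain ⟨l, hx'l, hhl⟩ := ex0
      have hzpos : 0 < z l := by
        have h1 := hscj.1 l
        have h2 := hscj.2 l
        rcases lt_trichotomy (z l) 0 with hc | hc | hc
        · nlinarith
        · exact absurd (h2 hc) hhl.ne'
        · exact hc
      refine ⟨l, hhl.ne', ?_⟩
      have := hzl l
      have hple : z l ≤ -p l := by
        rw [hzl l]
        have := hxt0 l
        rw [hzl l] at hzpos
        linarith [hx'l]
      rw [abs_of_pos hzpos]
      linarith [neg_le_abs (p l)]
  -- charging argument
  set ψ : Fin k → Fin n := fun j => (hwit j).choose with hψdef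
  have hψ : ∀ j, h j (ψ j) ≠ 0 ∧ |z (ψ j)| ≤ |p (ψ j)| := fun j => (hwit j).choose_spec
  have hcharge : ∑ j, |h j (ψ j)| ≤ del := by
    rw [← Finset.sum_fiberwise_of_maps_to (g := ψ) (t := Finset.univ)
      (fun j _ => Finset.mem_univ (ψ j))]
    have hd : del = ∑ l, |p l| := by rw [hdel]; rfl
    rw [hd]
    apply Finset.sum_le_sum
    intro l _
    by_cases hne : (Finset.univ.filter (fun j => ψ j = l)).Nonempty
    · obtain ⟨j₀, hj₀⟩ := hne
      have hj₀l : ψ j₀ = l := (Finset.mem_filter.mp hj₀).2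
      have hsum_eq : ∑ j ∈ Finset.univ.filter (fun j => ψ j = l), |h j (ψ j)| =
          ∑ j ∈ Finset.univ.filter (fun j => ψ j = l), |h j l| := by
        apply Finset.sum_congr rfl
        intro j hj
        rw [(Finset.mem_filter.mp hj).2]
      rw [hsum_eq]
      calc ∑ j ∈ Finset.univ.filter (fun j => ψ j = l), |h j l|
          ≤ ∑ j, |h j l| := Finset.sum_le_sum_of_subset_of_nonneg
            (Finset.subset_univ _) (fun j _ _ => abs_nonneg _)
        _ = |z l| := habs l
        _ ≤ |p l| := by
            have := (hψ j₀).2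
            rw [hj₀l] at this
            exact this
    · rw [Finset.not_nonempty_iff_eq_empty.mp hne]
      simp
  have hkbd : ∀ i, |z i| ≤ kappa W * del := by
    intro i
    have h1 : |z i| = ∑ j, |h j i| := (habs i).symm
    have h2 : ∀ j : Fin k, |h j i| ≤ kappa W * |h j (ψ j)| := by
      intro j
      by_cases hl : h j i = 0
      · rw [hl, abs_zero]
        exact mul_nonneg kappa_nonneg (abs_nonneg _)
      · exact kappa_ratio (hprops j).2.2.2 (hprops j).1 (hprops j).2.1 rfl hl (hψ j).1
    calc |z i| = ∑ j, |h j i| := h1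
      _ ≤ ∑ j, kappa W * |h j (ψ j)| := Finset.sum_le_sum fun j _ => h2 j
      _ = kappa W * ∑ j, |h j (ψ j)| := (Finset.mul_sum _ _ _).symm
      _ ≤ kappa W * del := mul_le_mul_of_nonneg_left hcharge kappa_nonneg
  refine ⟨x', hx'Opt.1, hOptopt x' hx'Opt, ?_⟩
  intro i
  have h1 : x' i - xt i = z i + p i := by
    rw [hzl i]; ring
  rw [h1]
  calc |z i + p i| ≤ |z i| + |p i| := abs_add_le _ _
    _ ≤ kappa W * del + del := add_le_add (hkbd i) (hpl i)
    _ = (kappa W + 1) * norm1 (d - dt) := by rw [← hdel]; ring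

end Aux6
/-- there is a primal optimal solution positive on the large and
medium coordinates `I_L ∪ I_M` and vanishing on `I_S⁰ = I_S ∩ cl(I_L)`. -/
theorem primal_optimal_support_fixing {n : ℕ} (W : Submodule ℝ (Fin n → ℝ))
    (c d dt xt s : Fin n → ℝ) (tau T : ℝ)
    (hopt : IsOptimalPair W dt c xt s)
    (hfeas : ∃ x : Fin n → ℝ, x - d ∈ W ∧ ∀ i, 0 ≤ x i)
    (htau : (kappa W + 1) * norm1 (d - dt) ≤ tau)
    (hT : (2 * n * kappa W + 1) * tau ≤ T) :
    ∃ x'' : Fin n → ℝ,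
      (x'' - d ∈ W ∧ (∀ i, 0 ≤ x'' i) ∧
        ∀ x' : Fin n → ℝ, x' - d ∈ W → (∀ i, 0 ≤ x' i) →
          ∑ i, c i * x'' i ≤ ∑ i, c i * x' i) ∧
      (∀ i, tau < xt i → 0 < x'' i) ∧
      (∀ i, xt i ≤ tau → i ∈ clos W {j | T < xt j} → x'' i = 0) := by
  classical
  obtain ⟨⟨hxtW, hxt0⟩, ⟨hsOrth, hs0⟩, hxs⟩ := hopt
  have hcomp : ∀ i, 0 < xt i → s i = 0 := by
    intro i hi
    have hterm : ∀ j ∈ Finset.univ, 0 ≤ xt j * s j := fun j _ => mul_nonneg (hxt0 j) (hs0 j)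
    have := (Finset.sum_eq_zero_iff_of_nonneg hterm).mp hxs i (Finset.mem_univ i)
    rcases mul_eq_zero.mp this with h | h
    · exact absurd h hi.ne'
    · exact h
  have hdel0 : 0 ≤ norm1 (d - dt) := Finset.sum_nonneg fun i _ => abs_nonneg _
  have hk1 : (1:ℝ) ≤ kappa W := one_le_kappa
  have hk0 : (0:ℝ) ≤ kappa W := kappa_nonneg
  have hn0 : (0:ℝ) ≤ (n : ℝ) := Nat.cast_nonneg n
  have htau0 : 0 ≤ tau := le_trans (by nlinarith) htau
  have h2nk : 0 ≤ 2 * (n:ℝ) * kappa W * tau :=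
    mul_nonneg (mul_nonneg (mul_nonneg (by norm_num) hn0) hk0) htau0
  have htauT : tau ≤ T := le_trans (by nlinarith [h2nk]) hT
  have hT0 : 0 ≤ T := le_trans htau0 htauT
  obtain ⟨x', ⟨hx'W, hx'0⟩, hx'opt, hx'prox⟩ := proximity hsOrth hs0 hxtW hxt0 hcomp hfeas
  have hprox : ∀ i, |x' i - xt i| ≤ tau := fun i => le_trans (hx'prox i) htau
  set IL : Set (Fin n) := {j | T < xt j} with hIL
  set D : Finset (Fin n) := Finset.univ.filter (fun i => xt i ≤ tau ∧ i ∈ clos W IL) with hD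
  have hDmem : ∀ i, i ∈ D ↔ (xt i ≤ tau ∧ i ∈ clos W IL) := by
    intro i
    simp [hD]
  have hGex : ∀ i, i ∈ D → ∃ gv : Fin n → ℝ, gv ∈ W ∧ gv i = 1 ∧
      (∀ l, ¬ T < xt l → l ≠ i → gv l = 0) ∧ (∀ l, |gv l| ≤ kappa W) := by
    intro i hiD
    obtain ⟨hitau, hclos⟩ := (hDmem i).mp hiD
    have hnot : i ∉ IL := by
      rw [hIL]
      simp only [Set.mem_setOf_eq, not_lt]
      linarith
    simp only [clos, Set.mem_union, Set.mem_setOf_eq] at hclos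
    rcases hclos with hc | hc
    · exact absurd hc hnot
    · obtain ⟨-, C, hC, hiC, hCsub⟩ := hc
      obtain ⟨g0, hg0W, hg00, hg0s⟩ := circuit_exists_fullsupp hC
      have hg0i : g0 i ≠ 0 := by
        rw [← hg0s] at hiC
        exact hiC
      refine ⟨(g0 i)⁻¹ • g0, Submodule.smul_mem _ _ hg0W, by
        simp only [Pi.smul_apply, smul_eq_mul]
        field_simp, ?_, ?_⟩
      · intro l hl hli
        have hlC : l ∉ C := by
          intro hlC
          rcases hCsub hlC with h | h
          · exact hl (by rw [hIL] at h; exact h)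
          · exact hli (by simpa using h)
        have hg0l : g0 l = 0 := by
          by_contra hc2
          exact hlC (hg0s ▸ (hc2 : l ∈ {i | g0 i ≠ 0}))
        simp [hg0l]
      · intro l
        by_cases hl : g0 l = 0
        · simp only [Pi.smul_apply, smul_eq_mul, hl, mul_zero, abs_zero]
          exact hk0
        · have hlC : l ∈ C := hg0s ▸ (hl : l ∈ {i | g0 i ≠ 0})
          have hrat := kappa_ratio hC hg0W hg00 hg0s hlC hiC
          rw [Pi.smul_apply, smul_eq_mul, abs_mul, abs_inv]
          have hpos : 0 < |g0 i| := abs_pos.mpr hg0i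
          rw [inv_mul_le_iff₀ hpos]
          nlinarith
  choose G hG using hGex
  set Gt : Fin n → (Fin n → ℝ) := fun i => if hi : i ∈ D then G i hi else 0 with hGt
  have hGtW : ∀ i, Gt i ∈ W := by
    intro i
    by_cases hi : i ∈ D
    · simp only [hGt, dif_pos hi]; exact (hG i hi).1
    · simp only [hGt, dif_neg hi]; exact zero_mem W
  have hGti : ∀ i ∈ D, Gt i i = 1 := by
    intro i hi
    simp only [hGt, dif_pos hi]
    exact (hG i hi).2.1
  have hGtz : ∀ i ∈ D, ∀ l, ¬ T < xt l → l ≠ i → Gt i l = 0 := by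
    intro i hi l h1 h2
    simp only [hGt, dif_pos hi]
    exact (hG i hi).2.2.1 l h1 h2
  have hGtb : ∀ i ∈ D, ∀ l, |Gt i l| ≤ kappa W := by
    intro i hi l
    simp only [hGt, dif_pos hi]
    exact (hG i hi).2.2.2 l
  set w : Fin n → ℝ := ∑ i ∈ D, x' i • Gt i with hw
  have hwW : w ∈ W := Submodule.sum_mem _ fun i _ => Submodule.smul_mem _ _ (hGtW i)
  have hwl : ∀ l, w l = ∑ i ∈ D, x' i * Gt i l := by
    intro l
    rw [hw]
    simp [Finset.sum_apply]
  have hwD : ∀ l ∈ D, w l = x' l := by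
    intro l hl
    rw [hwl l]
    have hTl : ¬ T < xt l := by
      have := ((hDmem l).mp hl).1
      push_neg
      linarith
    rw [Finset.sum_eq_single_of_mem l hl]
    · rw [hGti l hl]; ring
    · intro i hi hne
      rw [hGtz i hi l hTl (Ne.symm hne), mul_zero]
  have hwZ : ∀ l, ¬ T < xt l → l ∉ D → w l = 0 := by
    intro l h1 h2
    rw [hwl l]
    apply Finset.sum_eq_zero
    intro i hi
    have hne : l ≠ i := fun he => h2 (he ▸ hi)
    rw [hGtz i hi l h1 hne, mul_zero]
  have hx'2tau : ∀ i ∈ D, x' i ≤ 2 * tau := by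
    intro i hi
    have h1 := (abs_le.mp (hprox i)).2
    have h2 := ((hDmem i).mp hi).1
    linarith
  have hcardD : (D.card : ℝ) ≤ (n : ℝ) := by
    have : D.card ≤ n := le_trans (Finset.card_le_univ D) (le_of_eq (by simp))
    exact_mod_cast this
  have hwbound : ∀ l, |w l| ≤ 2 * n * kappa W * tau := by
    intro l
    rw [hwl l]
    calc |∑ i ∈ D, x' i * Gt i l| ≤ ∑ i ∈ D, |x' i * Gt i l| :=
        Finset.abs_sum_le_sum_abs _ _
      _ ≤ ∑ i ∈ D, 2 * tau * kappa W := by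
          apply Finset.sum_le_sum
          intro i hi
          rw [abs_mul, abs_of_nonneg (hx'0 i)]
          have h1 := hGtb i hi l
          have h2 := hx'2tau i hi
          nlinarith [hx'0 i, abs_nonneg (Gt i l)]
      _ = (D.card : ℝ) * (2 * tau * kappa W) := by
          rw [Finset.sum_const, nsmul_eq_mul]
      _ ≤ (n : ℝ) * (2 * tau * kappa W) :=
          mul_le_mul_of_nonneg_right hcardD
            (mul_nonneg (mul_nonneg (by norm_num) htau0) hk0)
      _ = 2 * n * kappa W * tau := by ring
  -- positivity on large coordinates
  have hlarge : ∀ l, T < xt l → 0 < x' l - w l := by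
    intro l hl
    have h1 := (abs_le.mp (hprox l)).1
    have h2 := (abs_le.mp (hwbound l)).2
    nlinarith
  refine ⟨x' - w, ⟨?_, ?_, ?_⟩, ?_, ?_⟩
  · have : x' - w - d = (x' - d) - w := by abel
    rw [this]
    exact sub_mem hx'W hwW
  · intro l
    rw [Pi.sub_apply]
    by_cases hTl : T < xt l
    · exact (hlarge l hTl).le
    · by_cases hlD : l ∈ D
      · rw [hwD l hlD]; linarith
      · rw [hwZ l hTl hlD, sub_zero]; exact hx'0 l
  · intro y hyW hy0
    have hexp : ∑ i, c i * (x' - w) i = ∑ i, c i * x' i - ∑ i, c i * w i := by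
      rw [← Finset.sum_sub_distrib]
      exact Finset.sum_congr rfl fun i _ => by simp only [Pi.sub_apply]; ring
    rw [hexp, pairing_eq hsOrth hwW]
    have hsw : 0 ≤ ∑ i, s i * w i := by
      apply Finset.sum_nonneg
      intro l _
      by_cases hTl : T < xt l
      · rw [hcomp l (lt_of_le_of_lt hT0 hTl), zero_mul]
      · by_cases hlD : l ∈ D
        · rw [hwD l hlD]
          exact mul_nonneg (hs0 l) (hx'0 l)
        · rw [hwZ l hTl hlD, mul_zero]
    have := hx'opt y hyW hy0
    linarith
  · intro i hi
    rw [Pi.sub_apply]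
    by_cases hTl : T < xt i
    · exact hlarge i hTl
    · have hiD : i ∉ D := by
        rw [hDmem i]
        push_neg
        intro hc
        linarith
      rw [hwZ i hTl hiD, sub_zero]
      have := (abs_le.mp (hprox i)).1
      linarith
  · intro i h1 h2
    have hiD : i ∈ D := (hDmem i).mpr ⟨h1, h2⟩
    rw [Pi.sub_apply, hwD i hiD, sub_self]
end

section
/- Let A ∈ ℝ^{m×n} with rank(A) = m, W = ker(A), y ∈ W ∖ {0}, and J ⊆ {1,…,n} with y_J ≠ 0. Then there exist t ≤ n, coefficients α₁,…,α_t ≥ 0 with α₁ + ⋯ + α_t = 1, and vectors y^{(1)},…,y^{(t)} ∈ W, each having inclusion-wise minimal support subject to the constraint y^{(j)}_J = y_J, such that the vector z := y − Σ_{j=1}^t α_j y^{(j)} belongs to W, is sign-consistent with y, and satisfies z_J = 0 (z = 0 is possible). -/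
open scoped BigOperators

variable {ι : Type*} [Fintype ι] [DecidableEq ι]

section AuxConvexDecomp

variable {n : ℕ}

/-- Support of a vector as a `Finset`. -/
noncomputable def suppF (x : Fin n → ℝ) : Finset (Fin n) :=
  (Set.toFinite {i | x i ≠ 0}).toFinset

lemma mem_suppF {x : Fin n → ℝ} {i : Fin n} : i ∈ suppF x ↔ x i ≠ 0 :=
  Set.Finite.mem_toFinset _

lemma ssubset_suppF {u v : Fin n → ℝ} (h : {i | u i ≠ 0} ⊂ {i | v i ≠ 0}) :
    suppF u ⊂ suppF v :=
  Set.Finite.toFinset_ssubset_toFinset.2 h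

lemma sc_trans_s14 {a b c : Fin n → ℝ} (hba : SignConsistent b a) (hcb : SignConsistent c b) :
    SignConsistent c a := by
  obtain ⟨h1, h2⟩ := hba
  obtain ⟨h3, h4⟩ := hcb
  refine ⟨fun i => ?_, fun i hai => h4 i (h2 i hai)⟩
  rcases eq_or_ne (b i) 0 with hb | hb
  · simp [h4 i hb]
  · have hb2 : 0 < b i * b i := mul_self_pos.2 hb
    nlinarith [mul_nonneg (h1 i) (h3 i)]

lemma sc_smul_s14 {u v : Fin n → ℝ} (h : SignConsistent u v) {c : ℝ} (hc : 0 ≤ c) :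
    SignConsistent (c • u) v := by
  refine ⟨fun i => ?_, fun i hv => ?_⟩
  · have := h.1 i
    simp only [Pi.smul_apply, smul_eq_mul]
    nlinarith
  · simp [h.2 i hv]

lemma exists_minsupp (W : Submodule ℝ (Fin n → ℝ)) (J : Finset (Fin n)) (y : Fin n → ℝ)
    (hy : y ∈ W) :
    ∃ Y1, Y1 ∈ W ∧ (∀ i ∈ J, Y1 i = y i) ∧ (∀ i, y i = 0 → Y1 i = 0) ∧
      ∀ y'' ∈ W, (∀ i ∈ J, y'' i = y i) → ¬({i | y'' i ≠ 0} ⊂ {i | Y1 i ≠ 0}) := by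
  classical
  set S : (Fin n → ℝ) → Prop :=
    fun w => w ∈ W ∧ (∀ i ∈ J, w i = y i) ∧ ∀ i, y i = 0 → w i = 0 with hS
  have hex : ∃ c : ℕ, ∃ w, S w ∧ (suppF w).card = c :=
    ⟨(suppF y).card, y, ⟨hy, fun _ _ => rfl, fun _ h => h⟩, rfl⟩
  obtain ⟨w, hw, hwc⟩ := Nat.find_spec hex
  refine ⟨w, hw.1, hw.2.1, hw.2.2, ?_⟩
  intro y'' hy''W hy''J hsub
  have hss : suppF y'' ⊂ suppF w := ssubset_suppF hsub
  have hS'' : S y'' := by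
    refine ⟨hy''W, hy''J, fun i hi => ?_⟩
    by_contra h
    exact (mem_suppF.1 (hss.1 (mem_suppF.2 h))) (hw.2.2 i hi)
  have hle : Nat.find hex ≤ (suppF y'').card := Nat.find_le ⟨y'', hS'', rfl⟩
  have hlt : (suppF y'').card < (suppF w).card := Finset.card_lt_card hss
  omega

lemma main_aux (W : Submodule ℝ (Fin n → ℝ)) (J : Finset (Fin n)) :
    ∀ k : ℕ, ∀ y : Fin n → ℝ, y ∈ W → (suppF y).card ≤ k → (∃ i ∈ J, y i ≠ 0) →
    ∃ (t : ℕ) (α : Fin t → ℝ) (Y : Fin t → (Fin n → ℝ)),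
      t ≤ k ∧ (∀ j, 0 ≤ α j) ∧ (∑ j, α j) = 1 ∧
      (∀ j, Y j ∈ W ∧ (∀ i ∈ J, Y j i = y i) ∧
        ∀ y'' ∈ W, (∀ i ∈ J, y'' i = y i) → ¬ ({i | y'' i ≠ 0} ⊂ {i | Y j i ≠ 0})) ∧
      (y - ∑ j, α j • Y j) ∈ W ∧
      SignConsistent (y - ∑ j, α j • Y j) y ∧
      (∀ i ∈ J, (y - ∑ j, α j • Y j) i = 0) := by
  intro k
  induction k with
  | zero =>
    intro y _ hc hJ
    obtain ⟨i, _, h⟩ := hJ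
    have : 0 < (suppF y).card := Finset.card_pos.2 ⟨i, mem_suppF.2 h⟩
    omega
  | succ k ih =>
    intro y hyW hcard hJ
    classical
    obtain ⟨i₀, hi₀J, hi₀⟩ := hJ
    obtain ⟨Y1, hY1W, hY1J, hY1supp, hY1min⟩ := exists_minsupp W J y hyW
    set T : Finset (Fin n) := Finset.univ.filter (fun i => 0 < y i * Y1 i) with hT
    have hmemT : ∀ i, i ∈ T ↔ 0 < y i * Y1 i := by
      intro i; simp [hT]
    have hi₀T : i₀ ∈ T := by
      rw [hmemT, hY1J i₀ hi₀J]
      exact mul_self_pos.2 hi₀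
    have hTne : T.Nonempty := ⟨i₀, hi₀T⟩
    set f : Fin n → ℝ := fun i => y i ^ 2 / (y i * Y1 i) with hf
    set α : ℝ := T.inf' hTne f with hα
    have hαpos : 0 < α := by
      rw [hα, Finset.lt_inf'_iff]
      intro i hi
      have hp : 0 < y i * Y1 i := (hmemT i).1 hi
      have hyi : y i ≠ 0 := by
        intro h; rw [h] at hp; simp at hp
      exact div_pos (by positivity) hp
    have hα1 : α ≤ 1 := by
      have h1 : f i₀ = 1 := by
        rw [hf]
        simp only
        rw [hY1J i₀ hi₀J, sq, div_self (mul_self_ne_zero.2 hi₀)]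
      calc α ≤ f i₀ := Finset.inf'_le f hi₀T
        _ = 1 := h1
    have hkey : ∀ i, α * (y i * Y1 i) ≤ y i ^ 2 := by
      intro i
      by_cases hi : i ∈ T
      · have hp : 0 < y i * Y1 i := (hmemT i).1 hi
        have := Finset.inf'_le f hi
        rw [← hα] at this
        calc α * (y i * Y1 i) ≤ f i * (y i * Y1 i) := by nlinarith
          _ = y i ^ 2 := by rw [hf]; exact div_mul_cancel₀ _ (ne_of_gt hp)
      · have hp : y i * Y1 i ≤ 0 := by
          by_contra h
          exact hi ((hmemT i).2 (not_le.1 h))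
        nlinarith
    have hz'sc : SignConsistent (y - α • Y1) y := by
      refine ⟨fun i => ?_, fun i hzi => ?_⟩
      · have := hkey i
        simp only [Pi.sub_apply, Pi.smul_apply, smul_eq_mul]
        nlinarith
      · simp [hY1supp i hzi, hzi]
    have hz'J : ∀ i ∈ J, (y - α • Y1) i = (1 - α) * y i := by
      intro i hi
      simp [hY1J i hi]; ring
    rcases eq_or_lt_of_le hα1 with hαe | hαlt
    · -- α = 1 : single term
      refine ⟨1, fun _ => 1, fun _ => Y1, Nat.one_le_iff_ne_zero.2 (Nat.succ_ne_zero k), 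
        fun _ => zero_le_one, by simp, fun _ => ⟨hY1W, hY1J, hY1min⟩, ?_, ?_, ?_⟩
      · have hsum : (∑ j : Fin 1, (1:ℝ) • Y1) = Y1 := by simp
        rw [hsum]
        exact W.sub_mem hyW hY1W
      · have hsum : (∑ j : Fin 1, (1:ℝ) • Y1) = Y1 := by simp
        rw [hsum]
        have : Y1 = α • Y1 := by rw [hαe, one_smul]
        rw [this]
        exact hz'sc
      · intro i hi
        have hsum : (∑ j : Fin 1, (1:ℝ) • Y1) = Y1 := by simp
        rw [hsum]
        have : Y1 = α • Y1 := by rw [hαe, one_smul]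
        rw [this]
        rw [hz'J i hi, hαe]
        ring
    · -- α < 1 : recurse
      have h1α : (0:ℝ) < 1 - α := by linarith
      have h1αne : (1:ℝ) - α ≠ 0 := ne_of_gt h1α
      obtain ⟨is, hisT, his⟩ := Finset.exists_mem_eq_inf' hTne f
      have hpis : 0 < y is * Y1 is := (hmemT is).1 hisT
      have hyis : y is ≠ 0 := by
        intro h; rw [h] at hpis; simp at hpis
      have hz'is : (y - α • Y1) is = 0 := by
        have hprod : y is * ((y - α • Y1) is) = 0 := by
          have hαis : α = y is ^ 2 / (y is * Y1 is) := his.trans rfl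
          have hne : y is * Y1 is ≠ 0 := ne_of_gt hpis
          simp only [Pi.sub_apply, Pi.smul_apply, smul_eq_mul]
          rw [hαis]
          have hY : Y1 is ≠ 0 := (mul_ne_zero_iff.1 hne).2
          rw [div_mul_eq_mul_div, mul_div_mul_right _ _ hY, sq, mul_div_cancel_right₀ _ hyis,
            sub_self, mul_zero]
        rcases mul_eq_zero.1 hprod with h | h
        · exact absurd h hyis
        · exact h
      set y' : Fin n → ℝ := (1 - α)⁻¹ • (y - α • Y1) with hy'
      have hy'W : y' ∈ W := W.smul_mem _ (W.sub_mem hyW (W.smul_mem _ hY1W))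
      have hy'J : ∀ i ∈ J, y' i = y i := by
        intro i hi
        rw [hy']
        simp only [Pi.smul_apply, smul_eq_mul]
        rw [hz'J i hi, ← mul_assoc, inv_mul_cancel₀ h1αne, one_mul]
      have hy'supp : suppF y' ⊆ (suppF y).erase is := by
        intro i hi
        have hi' : y' i ≠ 0 := mem_suppF.1 hi
        have hz'i : (y - α • Y1) i ≠ 0 := by
          intro h
          apply hi'
          rw [hy']
          simp [h]
        refine Finset.mem_erase.2 ⟨?_, mem_suppF.2 ?_⟩
        · intro h; rw [h] at hz'i; exact hz'i hz'is
        · intro h; exact hz'i (hz'sc.2 i h)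
      have hcard' : (suppF y').card ≤ k := by
        have h1 : is ∈ suppF y := mem_suppF.2 hyis
        have h2 : (suppF y').card ≤ ((suppF y).erase is).card :=
          Finset.card_le_card hy'supp
        rw [Finset.card_erase_of_mem h1] at h2
        omega
      have hJ' : ∃ i ∈ J, y' i ≠ 0 := ⟨i₀, hi₀J, by rw [hy'J i₀ hi₀J]; exact hi₀⟩
      obtain ⟨t', β, Y', ht', hβ0, hβ1, hY'prop, hz''W, hz''sc, hz''J⟩ :=
        ih y' hy'W hcard' hJ'
      refine ⟨t' + 1, Fin.cons α (fun j => (1 - α) * β j), Fin.cons Y1 Y',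
        Nat.succ_le_succ ht', ?_, ?_, ?_, ?_, ?_, ?_⟩
      · intro j
        refine Fin.cases ?_ ?_ j
        · exact le_of_lt hαpos
        · intro j'
          simp only [Fin.cons_succ]
          exact mul_nonneg (le_of_lt h1α) (hβ0 j')
      · rw [Fin.sum_univ_succ]
        simp only [Fin.cons_zero, Fin.cons_succ]
        rw [← Finset.mul_sum, hβ1]
        ring
      · intro j
        refine Fin.cases ?_ ?_ j
        · exact ⟨hY1W, hY1J, hY1min⟩
        · intro j'
          simp only [Fin.cons_zero, Fin.cons_succ]
          obtain ⟨hw, hag, hmin⟩ := hY'prop j'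
          exact ⟨hw, fun i hi => (hag i hi).trans (hy'J i hi),
            fun y'' hy'' hagr => hmin y'' hy'' (fun i hi => (hagr i hi).trans (hy'J i hi).symm)⟩
      all_goals {
        have hsum : (∑ j : Fin (t' + 1), (Fin.cons α (fun j => (1 - α) * β j) : Fin (t'+1) → ℝ) j • Fin.cons Y1 Y' j)
            = α • Y1 + (1 - α) • ∑ j : Fin t', β j • Y' j := by
          rw [Fin.sum_univ_succ]
          simp only [Fin.cons_zero, Fin.cons_succ]
          congr 1
          rw [Finset.smul_sum]
          exact Finset.sum_congr rfl fun j _ => mul_smul _ _ _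
        have h1smul : (1 - α) • y' = y - α • Y1 := by
          rw [hy', smul_smul, mul_inv_cancel₀ h1αne, one_smul]
        have hzeq : y - (∑ j : Fin (t' + 1), (Fin.cons α (fun j => (1 - α) * β j) : Fin (t'+1) → ℝ) j • Fin.cons Y1 Y' j)
            = (1 - α) • (y' - ∑ j : Fin t', β j • Y' j) := by
          rw [hsum, smul_sub, h1smul]
          abel
        rw [hzeq]
        first
        | exact W.smul_mem _ hz''W
        | exact sc_smul_s14 (sc_trans_s14 (sc_smul_s14 hz'sc (le_of_lt (inv_pos.2 h1α)) : SignConsistent y' y) hz''sc) (le_of_lt h1α)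
        | { intro i hi
            simp only [Pi.smul_apply, smul_eq_mul]
            rw [hz''J i hi, mul_zero] }
      }

end AuxConvexDecomp

/-- a vector `y ∈ ker A` can be reduced to a vector vanishing on `J`
by subtracting a convex combination of vectors of `ker A` with minimal support that
agree with `y` on `J`. -/
theorem convex_decomposition_minimal_support {m n : ℕ} (A : Matrix (Fin m) (Fin n) ℝ)
    (hrank : A.rank = m) (y : Fin n → ℝ)
    (hy : y ∈ LinearMap.ker A.mulVecLin) (hy0 : y ≠ 0)
    (J : Finset (Fin n)) (hyJ : ∃ i ∈ J, y i ≠ 0) :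
    ∃ (t : ℕ) (α : Fin t → ℝ) (Y : Fin t → (Fin n → ℝ)),
      t ≤ n ∧ (∀ j, 0 ≤ α j) ∧ (∑ j, α j) = 1 ∧
      (∀ j, Y j ∈ LinearMap.ker A.mulVecLin ∧ (∀ i ∈ J, Y j i = y i) ∧
        ∀ y'' ∈ LinearMap.ker A.mulVecLin, (∀ i ∈ J, y'' i = y i) →
          ¬ ({i | y'' i ≠ 0} ⊂ {i | Y j i ≠ 0})) ∧
      (y - ∑ j, α j • Y j) ∈ LinearMap.ker A.mulVecLin ∧
      SignConsistent (y - ∑ j, α j • Y j) y ∧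
      (∀ i ∈ J, (y - ∑ j, α j • Y j) i = 0) := by
  obtain ⟨t, α, Y, ht, h0, h1, hprop, hW, hsc, hJ0⟩ :=
    main_aux (LinearMap.ker A.mulVecLin) J (suppF y).card y hy le_rfl hyJ
  refine ⟨t, α, Y, le_trans ht ?_, h0, h1, hprop, hW, hsc, hJ0⟩
  calc (suppF y).card ≤ (Finset.univ : Finset (Fin n)).card := Finset.card_le_univ _
    _ = n := by simp
end
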